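/- (Theorem 3.1, non-asymptotic confidence interval.) Let ξ₁,…,ξ_N be i.i.d. samples from P* on a probability space, let P̂_N be their (random) empirical measure, let τ_ε := (1+ε)·inf_{x∈𝒳} E_{P̂_N}[h(x,ξ)] (a random variable, assumed a.s. finite), and let (x̂_N, k̂_N) be a (random) pair that is almost surely RS-feasible for τ_ε with respect to P̂_N. Suppose r_N > 0 and β_N ∈ (0,1) satisfy P{ d_W(P*, P̂_N) > r_N } ≤ β_N. Then with probability at least 1 − β_N: −L·r_N + τ_ε/(1+ε) ≤ J* ≤ E_{P*}[h(x̂_N,ξ)] ≤ k̂_N·r_N + τ_ε, where J* := inf_{x∈𝒳} E_{P*}[h(x,ξ)]. -/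

import Mathlib

open MeasureTheory

noncomputable section

abbrev Vec (m : ℕ) := EuclideanSpace ℝ (Fin m)

/-- A coupling of two Borel probability measures on `Vec m`. -/
def IsCoupling {m : ℕ} (γ : Measure (Vec m × Vec m)) (P Q : Measure (Vec m)) : Prop :=
  IsProbabilityMeasure γ ∧ γ.map Prod.fst = P ∧ γ.map Prod.snd = Q

/-- Type-1 Wasserstein distance: infimum of `∫ ‖ξ₁ - ξ₂‖₂ dγ` over couplings `γ`. -/
noncomputable def wDist {m : ℕ} (P Q : Measure (Vec m)) : ℝ :=
  sInf {c : ℝ | ∃ γ : Measure (Vec m × Vec m), IsCoupling γ P Q ∧ c = ∫ p, ‖p.1 - p.2‖ ∂γ}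

/-- `(x, k)` is RS-feasible for reference value `τ` with respect to `Phat`. -/
def RSFeasible {m : ℕ} {X : Type*} (h : X → Vec m → ℝ)
    (Phat : Measure (Vec m)) (τ : ℝ) (x : X) (k : ℝ) : Prop :=
  0 ≤ k ∧ ∀ P : Measure (Vec m), IsProbabilityMeasure P →
    Integrable (fun ξ => ‖ξ‖) P → (∫ ξ, h x ξ ∂P) - τ ≤ k * wDist P Phat

/-- Empirical measure `(1/N) ∑ δ_{x i}`. -/
noncomputable def empMeas {m N : ℕ} (xs : Fin N → Vec m) : Measure (Vec m) :=
  (N : ENNReal)⁻¹ • ∑ i : Fin N, Measure.dirac (xs i)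



section Aux

variable {m : ℕ}

lemma integrable_dirac_of_measurable {α : Type*} [MeasurableSpace α] {f : α → ℝ}
    (hf : Measurable f) (a : α) : Integrable f (Measure.dirac a) := by
  refine ⟨hf.aestronglyMeasurable, ?_⟩
  rw [HasFiniteIntegral, lintegral_dirac' a (by exact hf.nnnorm.coe_nnreal_ennreal)]
  exact ENNReal.coe_lt_top

lemma empMeas_isProb {N : ℕ} (hN : 0 < N) (xs : Fin N → Vec m) :
    IsProbabilityMeasure (empMeas xs) := by
  constructor
  simp only [empMeas, Measure.smul_apply, Measure.finset_sum_apply, Measure.dirac_apply' _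
    MeasurableSet.univ, Set.indicator_univ, Pi.one_apply, Finset.sum_const, Finset.card_univ,
    Fintype.card_fin, nsmul_eq_mul, mul_one, smul_eq_mul]
  exact ENNReal.inv_mul_cancel (by exact_mod_cast hN.ne') (by simp)

lemma empMeas_integrable {N : ℕ} (hN : 0 < N) (xs : Fin N → Vec m) {f : Vec m → ℝ}
    (hf : Measurable f) : Integrable f (empMeas xs) := by
  unfold empMeas
  refine Integrable.smul_measure ?_ (by simp [hN.ne'])
  exact integrable_finset_sum_measure.2 fun i _ => integrable_dirac_of_measurable hf _

lemma lipschitz_continuous {f : Vec m → ℝ} {L : ℝ} (hL : 0 ≤ L)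
    (hLip : ∀ ξ η, |f ξ - f η| ≤ L * ‖ξ - η‖) : Continuous f := by
  have : LipschitzWith L.toNNReal f := by
    apply LipschitzWith.of_dist_le_mul
    intro x y
    rw [Real.dist_eq, dist_eq_norm]
    calc |f x - f y| ≤ L * ‖x - y‖ := hLip x y
      _ = L.toNNReal * ‖x - y‖ := by rw [Real.coe_toNNReal L hL]
  exact this.continuous

/-- Kantorovich-type bound: Lipschitz expectations differ by at most `L * wDist`. -/
lemma abs_integral_sub_le_wDist (P Q : Measure (Vec m))
    [IsProbabilityMeasure P] [IsProbabilityMeasure Q]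
    (hPmom : Integrable (fun ξ => ‖ξ‖) P) (hQmom : Integrable (fun ξ => ‖ξ‖) Q)
    {f : Vec m → ℝ} {L : ℝ} (hL : 0 ≤ L)
    (hLip : ∀ ξ η, |f ξ - f η| ≤ L * ‖ξ - η‖)
    (hfP : Integrable f P) (hfQ : Integrable f Q) :
    |(∫ ξ, f ξ ∂P) - ∫ ξ, f ξ ∂Q| ≤ L * wDist P Q := by
  have hfc : Continuous f := lipschitz_continuous hL hLip
  set S : Set ℝ := {c : ℝ | ∃ γ : Measure (Vec m × Vec m), IsCoupling γ P Q ∧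
    c = ∫ p, ‖p.1 - p.2‖ ∂γ} with hS
  have hne : S.Nonempty := by
    refine ⟨∫ p, ‖p.1 - p.2‖ ∂(P.prod Q), P.prod Q, ⟨inferInstance, ?_, ?_⟩, rfl⟩
    · exact Measure.fst_prod
    · exact Measure.snd_prod
  have key : ∀ c ∈ S, |(∫ ξ, f ξ ∂P) - ∫ ξ, f ξ ∂Q| ≤ L * c := by
    rintro c ⟨γ, ⟨hγp, hfst, hsnd⟩, rfl⟩
    haveI := hγp
    have hfP' : Integrable (fun p : Vec m × Vec m => f p.1) γ := by
      rw [← hfst] at hfP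
      exact (integrable_map_measure hfc.aestronglyMeasurable measurable_fst.aemeasurable).1 hfP
    have hfQ' : Integrable (fun p : Vec m × Vec m => f p.2) γ := by
      rw [← hsnd] at hfQ
      exact (integrable_map_measure hfc.aestronglyMeasurable measurable_snd.aemeasurable).1 hfQ
    have hn1 : Integrable (fun p : Vec m × Vec m => ‖p.1‖) γ := by
      rw [← hfst] at hPmom
      exact (integrable_map_measure (by fun_prop) measurable_fst.aemeasurable).1 hPmom
    have hn2 : Integrable (fun p : Vec m × Vec m => ‖p.2‖) γ := by
      rw [← hsnd] at hQmom
      exact (integrable_map_measure (by fun_prop) measurable_snd.aemeasurable).1 hQmom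
    have hcost : Integrable (fun p : Vec m × Vec m => ‖p.1 - p.2‖) γ := by
      refine (hn1.add hn2).mono
        (continuous_fst.sub continuous_snd).norm.aestronglyMeasurable
        (Filter.Eventually.of_forall fun p => ?_)
      rw [norm_norm]
      calc ‖p.1 - p.2‖ ≤ ‖p.1‖ + ‖p.2‖ := norm_sub_le _ _
        _ ≤ ‖‖p.1‖ + ‖p.2‖‖ := le_abs_self _
    have hintP : (∫ ξ, f ξ ∂P) = ∫ p, f p.1 ∂γ := by
      rw [← hfst, integral_map measurable_fst.aemeasurable hfc.aestronglyMeasurable]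
    have hintQ : (∫ ξ, f ξ ∂Q) = ∫ p, f p.2 ∂γ := by
      rw [← hsnd, integral_map measurable_snd.aemeasurable hfc.aestronglyMeasurable]
    rw [hintP, hintQ, ← integral_sub hfP' hfQ']
    calc |∫ p, (f p.1 - f p.2) ∂γ| ≤ ∫ p, |f p.1 - f p.2| ∂γ := by
          simpa [Real.norm_eq_abs] using
            norm_integral_le_integral_norm (μ := γ) (fun p : Vec m × Vec m => f p.1 - f p.2)
      _ ≤ ∫ p, L * ‖p.1 - p.2‖ ∂γ := by
          refine integral_mono (hfP'.sub hfQ').abs (hcost.const_mul L) fun p => hLip _ _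
      _ = L * ∫ p, ‖p.1 - p.2‖ ∂γ := integral_const_mul L _
  rcases eq_or_lt_of_le hL with hL0 | hLpos
  · obtain ⟨c, hc⟩ := hne
    have := key c hc
    rw [← hL0] at this ⊢
    simpa using this
  · have h1 : |(∫ ξ, f ξ ∂P) - ∫ ξ, f ξ ∂Q| / L ≤ sInf S := by
      refine le_csInf hne fun c hc => ?_
      rw [div_le_iff₀ hLpos]
      rw [mul_comm]
      exact key c hc
    have := mul_le_mul_of_nonneg_left h1 hL
    rwa [mul_div_cancel₀ _ hLpos.ne'] at this

end Aux

/-- Theorem 3.1, non-asymptotic confidence interval: with probability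
at least 1 - beta_N, -L r_N + tau_eps/(1+eps) <= J* <= E_{P*}[h(xhat_N,.)] <= khat_N r_N + tau_eps. -/
theorem confidence_interval_optimal_loss {m N : ℕ} (hN : 0 < N)
    {X : Type*} [Nonempty X]
    {Ω : Type*} [MeasurableSpace Ω] (μ : Measure Ω) [IsProbabilityMeasure μ]
    (h : X → Vec m → ℝ) (L : ℝ) (hL : 0 ≤ L)
    (hLip : ∀ x ξ η, |h x ξ - h x η| ≤ L * ‖ξ - η‖)
    (hInt : ∀ x (P : Measure (Vec m)), IsProbabilityMeasure P →
      Integrable (fun ξ => ‖ξ‖) P → Integrable (h x) P)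
    (Pstar : Measure (Vec m)) [IsProbabilityMeasure Pstar]
    (hPstarmom : Integrable (fun ξ => ‖ξ‖) Pstar)
    -- i.i.d. samples from Pstar
    (ξs : Fin N → Ω → Vec m) (hmeas : ∀ i, Measurable (ξs i))
    (hindep : ProbabilityTheory.iIndepFun ξs μ)
    (hdist : ∀ i, μ.map (ξs i) = Pstar)
    -- empirical measure
    (Phat : Ω → Measure (Vec m)) (hPhat : ∀ ω, Phat ω = empMeas (fun i => ξs i ω))
    -- reference value
    (ε : ℝ) (hε : 0 < ε)
    (τ : Ω → ℝ) (hτ : ∀ ω, τ ω = (1 + ε) * ⨅ x, ∫ ξ, h x ξ ∂(Phat ω))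
    (hfin : ∀ᵐ ω ∂μ, BddBelow (Set.range fun x => ∫ ξ, h x ξ ∂(Phat ω)))
    -- almost surely RS-feasible random pair
    (xhat : Ω → X) (khat : Ω → ℝ)
    (hfeas : ∀ᵐ ω ∂μ, RSFeasible h (Phat ω) (τ ω) (xhat ω) (khat ω))
    -- concentration of the empirical measure
    (r β : ℝ) (hr : 0 < r) (hβ0 : 0 < β) (hβ1 : β < 1)
    (htail : μ {ω | r < wDist Pstar (Phat ω)} ≤ ENNReal.ofReal β) :
    ENNReal.ofReal (1 - β) ≤
      μ {ω | -L * r + τ ω / (1 + ε) ≤ (⨅ x, ∫ ξ, h x ξ ∂Pstar) ∧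
             (⨅ x, ∫ ξ, h x ξ ∂Pstar) ≤ (∫ ξ, h (xhat ω) ξ ∂Pstar) ∧
             (∫ ξ, h (xhat ω) ξ ∂Pstar) ≤ khat ω * r + τ ω} := by
  classical
  -- the good event
  set A : Set Ω := {ω | r < wDist Pstar (Phat ω)} with hA
  have hsub : ∀ᵐ ω ∂μ, ω ∈ Aᶜ →
      ω ∈ {ω | -L * r + τ ω / (1 + ε) ≤ (⨅ x, ∫ ξ, h x ξ ∂Pstar) ∧
             (⨅ x, ∫ ξ, h x ξ ∂Pstar) ≤ (∫ ξ, h (xhat ω) ξ ∂Pstar) ∧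
             (∫ ξ, h (xhat ω) ξ ∂Pstar) ≤ khat ω * r + τ ω} := by
    filter_upwards [hfin, hfeas] with ω hb hfe hw
    have hw' : wDist Pstar (Phat ω) ≤ r := not_lt.1 hw
    haveI hPp : IsProbabilityMeasure (Phat ω) := by
      rw [hPhat]; exact empMeas_isProb hN _
    have hPm : Integrable (fun ξ => ‖ξ‖) (Phat ω) := by
      rw [hPhat]; exact empMeas_integrable hN _ (by fun_prop)
    have hIs : ∀ x, Integrable (h x) Pstar := fun x => hInt x Pstar inferInstance hPstarmom
    have hIh : ∀ x, Integrable (h x) (Phat ω) := fun x => hInt x (Phat ω) hPp hPm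
    have hbd : ∀ x, |(∫ ξ, h x ξ ∂Pstar) - ∫ ξ, h x ξ ∂(Phat ω)| ≤ L * r := by
      intro x
      refine le_trans (abs_integral_sub_le_wDist Pstar (Phat ω) hPstarmom hPm hL
        (hLip x) (hIs x) (hIh x)) ?_
      exact mul_le_mul_of_nonneg_left hw' hL
    have hτω : τ ω / (1 + ε) = ⨅ x, ∫ ξ, h x ξ ∂(Phat ω) := by
      rw [hτ ω, mul_comm, mul_div_assoc, div_self (by linarith : (1:ℝ) + ε ≠ 0), mul_one]
    have hlow : ∀ x, (⨅ x, ∫ ξ, h x ξ ∂(Phat ω)) - L * r ≤ ∫ ξ, h x ξ ∂Pstar := by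
      intro x
      have h1 : (⨅ x, ∫ ξ, h x ξ ∂(Phat ω)) ≤ ∫ ξ, h x ξ ∂(Phat ω) := ciInf_le hb x
      have h2 := (abs_le.1 (hbd x)).1
      linarith
    have hbdPstar : BddBelow (Set.range fun x => ∫ ξ, h x ξ ∂Pstar) :=
      ⟨(⨅ x, ∫ ξ, h x ξ ∂(Phat ω)) - L * r, by rintro _ ⟨x, rfl⟩; exact hlow x⟩
    refine ⟨?_, ?_, ?_⟩
    · rw [hτω]
      have := le_ciInf hlow
      linarith [le_ciInf hlow]
    · exact ciInf_le hbdPstar (xhat ω)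
    · have := hfe.2 Pstar inferInstance hPstarmom
      have h2 : khat ω * wDist Pstar (Phat ω) ≤ khat ω * r :=
        mul_le_mul_of_nonneg_left hw' hfe.1
      linarith
  have hmono : μ Aᶜ ≤ μ {ω | -L * r + τ ω / (1 + ε) ≤ (⨅ x, ∫ ξ, h x ξ ∂Pstar) ∧
             (⨅ x, ∫ ξ, h x ξ ∂Pstar) ≤ (∫ ξ, h (xhat ω) ξ ∂Pstar) ∧
             (∫ ξ, h (xhat ω) ξ ∂Pstar) ≤ khat ω * r + τ ω} := by
    apply measure_mono_ae
    filter_upwards [hsub] with ω hω hmem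
    exact hω hmem
  refine le_trans ?_ hmono
  have h1 : (1 : ENNReal) ≤ μ A + μ Aᶜ := by
    rw [← measure_univ (μ := μ)]
    rw [← Set.union_compl_self A]
    exact measure_union_le _ _
  have h2 : (1 : ENNReal) - μ A ≤ μ Aᶜ := tsub_le_iff_right.2 (by rwa [add_comm] at h1)
  calc ENNReal.ofReal (1 - β) = ENNReal.ofReal 1 - ENNReal.ofReal β :=
        ENNReal.ofReal_sub 1 hβ0.le
    _ = 1 - ENNReal.ofReal β := by rw [ENNReal.ofReal_one]
    _ ≤ 1 - μ A := tsub_le_tsub_left htail 1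
    _ ≤ μ Aᶜ := h2
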